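/- arXiv:2008.06745 — 7 statements merged into one kernel-verified Lean document; each statement's English description precedes it below -/
import Mathlib

section
/- Let P be a Γ-colored poset (of any cardinality) that satisfies Green's properties G1, G2, G3, and G5. Then P also satisfies property G4: for all adjacent colors a, b, every element of P of color a has a neighbor of color b. -/
namespace GCP

/-- A Dynkin diagram on a finite set `Γ` of colors, encoded by the integers
`θ a b` of its generalized Cartan matrix. -/
structure DynkinDiagram (Γ : Type*) [Fintype Γ] where
  θ : Γ → Γ → ℤ
  diag : ∀ a, θ a a = 2
  offdiag_nonpos : ∀ a b, a ≠ b → θ a b ≤ 0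
  zero_iff : ∀ a b, a ≠ b → (θ a b = 0 ↔ θ b a = 0)

variable {Γ : Type*} [Fintype Γ] {P : Type*} [PartialOrder P] [LocallyFiniteOrder P]

/-- Distinct colors `a` and `b` are adjacent when `θ a b < 0`. -/
def DynkinDiagram.Adj (D : DynkinDiagram Γ) (a b : Γ) : Prop :=
  a ≠ b ∧ D.θ a b < 0

/-- Distinct colors `a` and `b` are distant when `θ a b = 0`. -/
def DynkinDiagram.Distant (D : DynkinDiagram Γ) (a b : Γ) : Prop :=
  a ≠ b ∧ D.θ a b = 0

theorem DynkinDiagram.Adj.symm {D : DynkinDiagram Γ} {a b : Γ} (h : D.Adj a b) :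
    D.Adj b a :=
  ⟨h.1.symm, lt_of_le_of_ne (D.offdiag_nonpos b a h.1.symm)
    (fun h0 => h.2.ne ((D.zero_iff a b h.1).mpr h0))⟩

/-- The simple graph underlying a Dynkin diagram, with an edge between each
pair of adjacent colors. -/
def DynkinDiagram.graph (D : DynkinDiagram Γ) : SimpleGraph Γ where
  Adj a b := D.Adj a b
  symm := ⟨fun _ _ h => h.symm⟩
  loopless := ⟨fun _ h => h.1 rfl⟩

/-- The Dynkin diagram is connected: any two colors are joined by a path of
adjacencies. -/
def DynkinDiagram.Connected (D : DynkinDiagram Γ) : Prop :=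
  ∀ a b : Γ, Relation.ReflTransGen D.Adj a b

/-- A poset is connected: any two elements are linked by a finite chain of
comparabilities (equivalently, the poset cannot be written as the disjoint
union of two nonempty subposets). -/
def PosetConnected (P : Type*) [PartialOrder P] : Prop :=
  ∀ x y : P, Relation.ReflTransGen (fun u v : P => u ≤ v ∨ v ≤ u) x y

/-- `x < y` are consecutive elements of the color `a`. -/
def Consecutive (κ : P → Γ) (a : Γ) (x y : P) : Prop :=
  x < y ∧ κ x = a ∧ κ y = a ∧ ∀ z ∈ Finset.Ioo x y, κ z ≠ a

/-- EC: elements with equal colors are comparable. -/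
def EC (κ : P → Γ) : Prop := ∀ x y : P, κ x = κ y → x ≤ y ∨ y ≤ x

/-- NA: neighbors (covering pairs) have adjacent colors. -/
def NA (D : DynkinDiagram Γ) (κ : P → Γ) : Prop :=
  ∀ x y : P, x ⋖ y → D.Adj (κ x) (κ y)

/-- AC: elements with adjacent colors are comparable. -/
def AC (D : DynkinDiagram Γ) (κ : P → Γ) : Prop :=
  ∀ x y : P, D.Adj (κ x) (κ y) → x ≤ y ∨ y ≤ x

/-- ICE2: the census of the open interval between consecutive elements of a
color is two. -/
def ICE2 (D : DynkinDiagram Γ) (κ : P → Γ) : Prop :=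
  ∀ (a : Γ) (x y : P), Consecutive κ a x y →
    ∑ z ∈ Finset.Ioo x y, (-D.θ (κ z) a) = 2

/-- `U(x,S)`: elements of `S` above `x` with color adjacent to that of `x`. -/
def USet (D : DynkinDiagram Γ) (κ : P → Γ) (S : Set P) (x : P) : Set P :=
  {y ∈ S | x < y ∧ D.Adj (κ y) (κ x)}

/-- `L(x,S)`: elements of `S` below `x` with color adjacent to that of `x`. -/
def LSet (D : DynkinDiagram Γ) (κ : P → Γ) (S : Set P) (x : P) : Set P :=
  {y ∈ S | y < x ∧ D.Adj (κ y) (κ x)}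

/-- UCBk: for every `x` maximal among elements of its color, `U(x,P)` is
finite with census at most `k`. -/
def UCB (D : DynkinDiagram Γ) (κ : P → Γ) (k : ℕ) : Prop :=
  ∀ x : P, (∀ y : P, κ y = κ x → ¬ x < y) →
    ∃ hfin : (USet D κ Set.univ x).Finite,
      ∑ y ∈ hfin.toFinset, (-D.θ (κ y) (κ x)) ≤ (k : ℤ)

/-- LCBk: for every `x` minimal among elements of its color, `L(x,P)` is
finite with census at most `k`. -/
def LCB (D : DynkinDiagram Γ) (κ : P → Γ) (k : ℕ) : Prop :=
  ∀ x : P, (∀ y : P, κ y = κ x → ¬ y < x) →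
    ∃ hfin : (LSet D κ Set.univ x).Finite,
      ∑ y ∈ hfin.toFinset, (-D.θ (κ y) (κ x)) ≤ (k : ℤ)

/-- The coloring properties of a Γ-colored d-complete poset (the coloring is
required to be surjective separately). -/
def DComplete (D : DynkinDiagram Γ) (κ : P → Γ) : Prop :=
  EC κ ∧ NA D κ ∧ AC D κ ∧ ICE2 D κ ∧ UCB D κ 1

/-- G1: each `P_a` and each `P_b ∪ P_c` for adjacent `b, c` is a chain. -/
def G1 (D : DynkinDiagram Γ) (κ : P → Γ) : Prop :=
  (∀ a : Γ, IsChain (· ≤ ·) {x : P | κ x = a}) ∧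
    ∀ b c : Γ, D.Adj b c → IsChain (· ≤ ·) {x : P | κ x = b ∨ κ x = c}

/-- G2: the order is the minimal partial order extending the given orders on
the chains `P_a` and `P_b ∪ P_c`; i.e. every relation `x ≤ y` lies in the
reflexive transitive closure of the relations between pairs of equal or
adjacent colors. -/
def G2 (D : DynkinDiagram Γ) (κ : P → Γ) : Prop :=
  ∀ x y : P, x ≤ y →
    Relation.ReflTransGen (fun u v : P => u ≤ v ∧ (κ u = κ v ∨ D.Adj (κ u) (κ v))) x y

/-- G3: every color set `P_a` is order-isomorphic to `ℤ`. -/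
def G3 (κ : P → Γ) : Prop := ∀ a : Γ, Nonempty ({x : P | κ x = a} ≃o ℤ)

/-- G4: for adjacent colors `a, b`, every element of color `a` has a neighbor
of color `b`. -/
def G4 (D : DynkinDiagram Γ) (κ : P → Γ) : Prop :=
  ∀ a b : Γ, D.Adj a b → ∀ x : P, κ x = a → ∃ y : P, κ y = b ∧ (x ⋖ y ∨ y ⋖ x)

/-- G5: the sum of `θ (κ z) a` over the closed interval between consecutive
elements of color `a` is two. -/
def G5 (D : DynkinDiagram Γ) (κ : P → Γ) : Prop :=
  ∀ (a : Γ) (x y : P), Consecutive κ a x y →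
    ∑ z ∈ Finset.Icc x y, D.θ (κ z) a = 2

/-- A full heap: a Γ-colored poset satisfying G1–G5. -/
def FullHeap (D : DynkinDiagram Γ) (κ : P → Γ) : Prop :=
  G1 D κ ∧ G2 D κ ∧ G3 κ ∧ G4 D κ ∧ G5 D κ

/-- S1: neighbors have equal or adjacent colors and incomparable elements
have distant colors. -/
def S1 (D : DynkinDiagram Γ) (κ : P → Γ) : Prop :=
  (∀ x y : P, x ⋖ y → κ x = κ y ∨ D.Adj (κ x) (κ y)) ∧
    ∀ x y : P, ¬ x ≤ y → ¬ y ≤ x → D.Distant (κ x) (κ y)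

/-- S2: the open interval between consecutive elements of color `a` contains
either exactly two elements of color adjacent to `a`, both `1`-adjacent to
`a`, or exactly one element, whose color is `2`-adjacent to `a`. -/
def S2 (D : DynkinDiagram Γ) (κ : P → Γ) : Prop :=
  ∀ (a : Γ) (x y : P), Consecutive κ a x y →
    (∃ u ∈ Finset.Ioo x y, ∃ v ∈ Finset.Ioo x y, u ≠ v ∧
        D.θ (κ u) a = -1 ∧ D.θ (κ v) a = -1 ∧
        ∀ z ∈ Finset.Ioo x y, D.Adj (κ z) a → z = u ∨ z = v) ∨
    (∃ w : P, Finset.Ioo x y = {w} ∧ D.θ (κ w) a = -2)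

/-- S3: an element maximal among elements of its color is covered by at most
one element; any such cover has color `1`-adjacent to it and is maximal among
elements of its own color. -/
def S3 (D : DynkinDiagram Γ) (κ : P → Γ) : Prop :=
  ∀ x : P, (∀ y : P, κ y = κ x → ¬ x < y) →
    (∀ y z : P, x ⋖ y → x ⋖ z → y = z) ∧
      ∀ y : P, x ⋖ y → D.θ (κ y) (κ x) = -1 ∧ ∀ z : P, κ z = κ y → ¬ y < z

/-- S4: the underlying simple graph of the Dynkin diagram is acyclic. -/
def S4 (D : DynkinDiagram Γ) : Prop := D.graph.IsAcyclic

/-- The coloring properties of a dominant minuscule heap (the poset is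
additionally required to be finite, and the coloring surjective). -/
def DominantMinusculeHeapProps (D : DynkinDiagram Γ) (κ : P → Γ) : Prop :=
  S1 D κ ∧ S2 D κ ∧ S3 D κ ∧ S4 D

/-- The color set `P_b` is bounded above in `P`. -/
def ColorBddAbove (κ : P → Γ) (b : Γ) : Prop := ∃ u : P, ∀ x : P, κ x = b → x ≤ u

/-- The color set `P_b` is bounded below in `P`. -/
def ColorBddBelow (κ : P → Γ) (b : Γ) : Prop := ∃ l : P, ∀ x : P, κ x = b → l ≤ x


section AuxLemmas
set_option linter.unusedSectionVars false

variable {Γ : Type*} [Fintype Γ] {P : Type*} [PartialOrder P] [LocallyFiniteOrder P]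

private lemma rtg_le {D : DynkinDiagram Γ} {κ : P → Γ} {x y : P}
    (h : Relation.ReflTransGen
      (fun u v : P => u ≤ v ∧ (κ u = κ v ∨ D.Adj (κ u) (κ v))) x y) :
    x ≤ y := by
  induction h with
  | refl => exact le_refl x
  | tail _ h₂ ih => exact le_trans ih h₂.1

private lemma cover_colors (D : DynkinDiagram Γ) (κ : P → Γ) (h2 : G2 D κ) {x y : P}
    (hxy : x ⋖ y) : κ x = κ y ∨ D.Adj (κ x) (κ y) := by
  have h := h2 x y hxy.le
  revert hxy
  induction h using Relation.ReflTransGen.head_induction_on with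
  | refl => intro hxy; exact absurd rfl hxy.lt.ne
  | head h' hrt ih =>
    intro hxy
    rcases hxy.eq_or_eq h'.1 (rtg_le hrt) with rfl | rfl
    · exact ih hxy
    · exact h'.2

private lemma cover_adj (D : DynkinDiagram Γ) (κ : P → Γ) (h2 : G2 D κ) (h5 : G5 D κ)
    {x y : P} (hxy : x ⋖ y) : D.Adj (κ x) (κ y) := by
  classical
  rcases cover_colors D κ h2 hxy with he | h
  · exfalso
    have hcons : Consecutive κ (κ x) x y :=
      ⟨hxy.lt, rfl, he.symm, fun z hz =>
        absurd (Finset.mem_Ioo.mp hz).2 (hxy.2 (Finset.mem_Ioo.mp hz).1)⟩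
    have hs := h5 (κ x) x y hcons
    have hIcc : Finset.Icc x y = {x, y} := by
      ext z
      simp only [Finset.mem_Icc, Finset.mem_insert, Finset.mem_singleton]
      constructor
      · rintro ⟨ha, hb⟩
        rcases hxy.eq_or_eq ha hb with rfl | rfl
        · exact Or.inl rfl
        · exact Or.inr rfl
      · rintro (rfl | rfl)
        · exact ⟨le_refl z, hxy.le⟩
        · exact ⟨hxy.le, le_refl z⟩
    rw [hIcc, Finset.sum_pair hxy.lt.ne, ← he, D.diag] at hs
    omega
  · exact h

private lemma exists_min_above (D : DynkinDiagram Γ) (κ : P → Γ) (h1 : G1 D κ) (h3 : G3 κ)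
    {a b : Γ} (hab : D.Adj a b) {x : P} (hx : κ x = a) :
    ∃ y : P, κ y = b ∧ x < y ∧ ∀ z : P, κ z = b → x < z → y ≤ z := by
  classical
  have hcomp : ∀ z : P, κ z = b → z < x ∨ x < z := by
    intro z hz
    have hne : z ≠ x := fun h => hab.1 (by rw [← hx, ← hz, h])
    rcases h1.2 a b hab (Or.inr hz : z ∈ {w : P | κ w = a ∨ κ w = b})
      (Or.inl hx : x ∈ {w : P | κ w = a ∨ κ w = b}) hne with h | h
    · exact Or.inl (lt_of_le_of_ne h hne)
    · exact Or.inr (lt_of_le_of_ne h (Ne.symm hne))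
  have hex : ∃ z : P, κ z = b ∧ x < z := by
    by_contra hno
    push_neg at hno
    obtain ⟨f⟩ := h3 b
    have hfin : ((Finset.Icc ((f.symm 0 : {w : P | κ w = b}) : P) x) : Set P).Finite :=
      (Finset.Icc _ x).finite_toSet
    apply hfin.not_infinite
    apply Set.infinite_of_injective_forall_mem
      (f := fun n : ℕ => ((f.symm (n : ℤ) : {w : P | κ w = b}) : P))
    · intro m n hmn
      have h' : ((m : ℤ)) = (n : ℤ) := f.symm.injective (Subtype.ext hmn)
      exact_mod_cast h'
    · intro n
      have hmem : κ ((f.symm (n : ℤ) : {w : P | κ w = b}) : P) = b := (f.symm (n : ℤ)).2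
      have hlt : ((f.symm (n : ℤ) : {w : P | κ w = b}) : P) < x :=
        (hcomp _ hmem).resolve_right (hno _ hmem)
      have hle : (f.symm 0 : {w : P | κ w = b}) ≤ f.symm (n : ℤ) :=
        f.symm.monotone (by exact_mod_cast Int.ofNat_nonneg n)
      exact Finset.mem_coe.mpr (Finset.mem_Icc.mpr ⟨hle, hlt.le⟩)
  obtain ⟨z₁, hz₁b, hxz₁⟩ := hex
  have hTne : ((Finset.Ioc x z₁).filter (fun z => κ z = b)).Nonempty :=
    ⟨z₁, by simp [Finset.mem_filter, Finset.mem_Ioc, hxz₁, hz₁b]⟩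
  obtain ⟨y, hyT, hymin⟩ : ∃ m ∈ (Finset.Ioc x z₁).filter (fun z => κ z = b),
      ∀ u ∈ (Finset.Ioc x z₁).filter (fun z => κ z = b), ¬u < m := by
    obtain ⟨m, hm⟩ := Finset.exists_minimal hTne
    exact ⟨m, hm.1, fun u hu hlt => lt_irrefl _ (lt_of_lt_of_le hlt (hm.2 hu hlt.le))⟩
  simp only [Finset.mem_filter, Finset.mem_Ioc] at hyT
  refine ⟨y, hyT.2, hyT.1.1, ?_⟩
  intro z hz hxz
  rcases eq_or_ne z y with rfl | hne
  · exact le_refl _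
  rcases h1.1 b (hz : z ∈ {w : P | κ w = b}) (hyT.2 : y ∈ {w : P | κ w = b}) hne with h | h
  · exact absurd (lt_of_le_of_ne h hne)
      (hymin z (by
        simp only [Finset.mem_filter, Finset.mem_Ioc]
        exact ⟨⟨hxz, le_trans h hyT.1.2⟩, hz⟩))
  · exact h

private lemma exists_max_below (D : DynkinDiagram Γ) (κ : P → Γ) (h1 : G1 D κ) (h3 : G3 κ)
    {a b : Γ} (hab : D.Adj a b) {x : P} (hx : κ x = a) :
    ∃ y : P, κ y = b ∧ y < x ∧ ∀ z : P, κ z = b → z < x → z ≤ y := by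
  classical
  have hcomp : ∀ z : P, κ z = b → z < x ∨ x < z := by
    intro z hz
    have hne : z ≠ x := fun h => hab.1 (by rw [← hx, ← hz, h])
    rcases h1.2 a b hab (Or.inr hz : z ∈ {w : P | κ w = a ∨ κ w = b})
      (Or.inl hx : x ∈ {w : P | κ w = a ∨ κ w = b}) hne with h | h
    · exact Or.inl (lt_of_le_of_ne h hne)
    · exact Or.inr (lt_of_le_of_ne h (Ne.symm hne))
  have hex : ∃ z : P, κ z = b ∧ z < x := by
    by_contra hno
    push_neg at hno
    obtain ⟨f⟩ := h3 b
    have hfin : ((Finset.Icc x ((f.symm 0 : {w : P | κ w = b}) : P)) : Set P).Finite :=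
      (Finset.Icc x _).finite_toSet
    apply hfin.not_infinite
    apply Set.infinite_of_injective_forall_mem
      (f := fun n : ℕ => ((f.symm (-(n : ℤ)) : {w : P | κ w = b}) : P))
    · intro m n hmn
      have h' : (-(m : ℤ)) = (-(n : ℤ)) := f.symm.injective (Subtype.ext hmn)
      omega
    · intro n
      have hmem : κ ((f.symm (-(n : ℤ)) : {w : P | κ w = b}) : P) = b := (f.symm (-(n : ℤ))).2
      have hlt : x < ((f.symm (-(n : ℤ)) : {w : P | κ w = b}) : P) :=
        (hcomp _ hmem).resolve_left (hno _ hmem)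
      have hle : f.symm (-(n : ℤ)) ≤ (f.symm 0 : {w : P | κ w = b}) :=
        f.symm.monotone (by omega)
      exact Finset.mem_coe.mpr (Finset.mem_Icc.mpr ⟨hlt.le, hle⟩)
  obtain ⟨z₁, hz₁b, hz₁x⟩ := hex
  have hTne : ((Finset.Ico z₁ x).filter (fun z => κ z = b)).Nonempty :=
    ⟨z₁, by simp [Finset.mem_filter, Finset.mem_Ico, hz₁x, hz₁b]⟩
  obtain ⟨y, hyT, hymax⟩ : ∃ m ∈ (Finset.Ico z₁ x).filter (fun z => κ z = b),
      ∀ u ∈ (Finset.Ico z₁ x).filter (fun z => κ z = b), ¬m < u := by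
    obtain ⟨m, hm⟩ := Finset.exists_maximal hTne
    exact ⟨m, hm.1, fun u hu hlt => lt_irrefl _ (lt_of_lt_of_le hlt (hm.2 hu hlt.le))⟩
  simp only [Finset.mem_filter, Finset.mem_Ico] at hyT
  refine ⟨y, hyT.2, hyT.1.2, ?_⟩
  intro z hz hzx
  rcases eq_or_ne z y with rfl | hne
  · exact le_refl _
  rcases h1.1 b (hz : z ∈ {w : P | κ w = b}) (hyT.2 : y ∈ {w : P | κ w = b}) hne with h | h
  · exact h
  · exact absurd (lt_of_le_of_ne h (Ne.symm hne))
      (hymax z (by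
        simp only [Finset.mem_filter, Finset.mem_Ico]
        exact ⟨⟨le_trans hyT.1.1 h, hzx⟩, hz⟩))

end AuxLemmas

/-- A Γ-colored poset satisfying G1, G2, G3, and G5 also
satisfies G4. -/
theorem statement0 (D : DynkinDiagram Γ) (κ : P → Γ) (hsurj : Function.Surjective κ)
    (h1 : G1 D κ) (h2 : G2 D κ) (h3 : G3 κ) (h5 : G5 D κ) :
    G4 D κ := by
  classical
  intro a b hab x hx
  obtain ⟨y, hyb, hxy, hymin⟩ := exists_min_above D κ h1 h3 hab hx
  obtain ⟨y', hy'b, hy'x, hy'max⟩ := exists_max_below D κ h1 h3 hab hx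
  by_cases hcu : x ⋖ y
  · exact ⟨y, hyb, Or.inl hcu⟩
  by_cases hcl : y' ⋖ x
  · exact ⟨y', hy'b, Or.inr hcl⟩
  exfalso
  have hy'y : y' < y := lt_trans hy'x hxy
  have hnotb : ∀ z ∈ Finset.Ioo y' y, κ z ≠ b := by
    intro z hz hzb
    rw [Finset.mem_Ioo] at hz
    have hne : z ≠ x := fun h => hab.1 (by rw [← hx, ← hzb, h])
    rcases h1.2 a b hab (Or.inl hx : x ∈ {w : P | κ w = a ∨ κ w = b})
      (Or.inr hzb : z ∈ {w : P | κ w = a ∨ κ w = b}) hne.symm with h | h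
    · exact absurd (hymin z hzb (lt_of_le_of_ne h hne.symm)) (not_le_of_gt hz.2)
    · exact absurd (hy'max z hzb (lt_of_le_of_ne h hne)) (not_le_of_gt hz.1)
  have hcons : Consecutive κ b y' y := ⟨hy'y, hy'b, hyb, hnotb⟩
  have hs := h5 b y' y hcons
  have hIcc : Finset.Icc y' y = insert y' (insert y (Finset.Ioo y' y)) := by
    ext z
    simp only [Finset.mem_Icc, Finset.mem_insert, Finset.mem_Ioo]
    constructor
    · rintro ⟨hz1, hz2⟩
      rcases hz1.lt_or_eq with hz1 | hz1
      · rcases hz2.lt_or_eq with hz2 | hz2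
        · exact Or.inr (Or.inr ⟨hz1, hz2⟩)
        · exact Or.inr (Or.inl hz2)
      · exact Or.inl hz1.symm
    · rintro (rfl | rfl | ⟨hz1, hz2⟩)
      · exact ⟨le_refl _, hy'y.le⟩
      · exact ⟨hy'y.le, le_refl _⟩
      · exact ⟨hz1.le, hz2.le⟩
  have hy'ni : y' ∉ insert y (Finset.Ioo y' y) := by
    simp only [Finset.mem_insert, Finset.mem_Ioo]
    push_neg
    exact ⟨hy'y.ne, fun h => absurd h (lt_irrefl y')⟩
  have hyni : y ∉ Finset.Ioo y' y := by
    simp only [Finset.mem_Ioo]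
    exact fun h => absurd h.2 (lt_irrefl y)
  rw [hIcc, Finset.sum_insert hy'ni, Finset.sum_insert hyni, hy'b, hyb, D.diag] at hs
  have hsum : ∑ z ∈ Finset.Ioo y' y, D.θ (κ z) b = -2 := by linarith
  obtain ⟨c, hc1, hc2⟩ : ∃ c, x < c ∧ c < y := by
    by_contra hno
    push_neg at hno
    exact hcu ⟨hxy, fun u hu huy => hno u hu huy⟩
  obtain ⟨w, hwmem, hwmax⟩ : ∃ m ∈ Finset.Ioo x y, ∀ u ∈ Finset.Ioo x y, ¬m < u := by
    obtain ⟨m, hm⟩ := Finset.exists_maximal (s := Finset.Ioo x y)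
      ⟨c, Finset.mem_Ioo.mpr ⟨hc1, hc2⟩⟩
    exact ⟨m, hm.1, fun u hu hlt => lt_irrefl _ (lt_of_lt_of_le hlt (hm.2 hu hlt.le))⟩
  rw [Finset.mem_Ioo] at hwmem
  have hwy : w ⋖ y :=
    ⟨hwmem.2, fun u hu huy => hwmax u (Finset.mem_Ioo.mpr ⟨lt_trans hwmem.1 hu, huy⟩) hu⟩
  have hwadj : D.Adj (κ w) b := by
    have := cover_adj D κ h2 h5 hwy
    rwa [hyb] at this
  obtain ⟨c', hc1', hc2'⟩ : ∃ c, y' < c ∧ c < x := by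
    by_contra hno
    push_neg at hno
    exact hcl ⟨hy'x, fun u hu hux => hno u hu hux⟩
  obtain ⟨v, hvmem, hvmin⟩ : ∃ m ∈ Finset.Ioo y' x, ∀ u ∈ Finset.Ioo y' x, ¬u < m := by
    obtain ⟨m, hm⟩ := Finset.exists_minimal (s := Finset.Ioo y' x)
      ⟨c', Finset.mem_Ioo.mpr ⟨hc1', hc2'⟩⟩
    exact ⟨m, hm.1, fun u hu hlt => lt_irrefl _ (lt_of_lt_of_le hlt (hm.2 hu hlt.le))⟩
  rw [Finset.mem_Ioo] at hvmem
  have hvy : y' ⋖ v :=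
    ⟨hvmem.1, fun u hu huv => hvmin u (Finset.mem_Ioo.mpr ⟨hu, lt_trans huv hvmem.2⟩) huv⟩
  have hvadj : D.Adj (κ v) b := by
    have := (cover_adj D κ h2 h5 hvy).symm
    rwa [hy'b] at this
  have hsub : ({v, x, w} : Finset P) ⊆ Finset.Ioo y' y := by
    intro z hz
    simp only [Finset.mem_insert, Finset.mem_singleton] at hz
    rcases hz with rfl | rfl | rfl
    · exact Finset.mem_Ioo.mpr ⟨hvmem.1, lt_trans hvmem.2 hxy⟩
    · exact Finset.mem_Ioo.mpr ⟨hy'x, hxy⟩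
    · exact Finset.mem_Ioo.mpr ⟨lt_trans hy'x hwmem.1, hwmem.2⟩
  have hle : ∑ z ∈ ({v, x, w} : Finset P), (-D.θ (κ z) b)
      ≤ ∑ z ∈ Finset.Ioo y' y, (-D.θ (κ z) b) := by
    apply Finset.sum_le_sum_of_subset_of_nonneg hsub
    intro i hi _
    have hnb := hnotb i hi
    have := D.offdiag_nonpos (κ i) b hnb
    omega
  have hS : ∑ z ∈ Finset.Ioo y' y, (-D.θ (κ z) b) = 2 := by
    rw [Finset.sum_neg_distrib, hsum]
    norm_num
  have hvx : v ≠ x := hvmem.2.ne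
  have hxw : x ≠ w := hwmem.1.ne
  have hvw : v ≠ w := (lt_trans hvmem.2 hwmem.1).ne
  rw [Finset.sum_insert (by simp [hvx, hvw]), Finset.sum_insert (by simp [hxw]),
    Finset.sum_singleton] at hle
  have hb1 : -D.θ (κ v) b ≥ 1 := by have := hvadj.2; omega
  have hb2 : -D.θ (κ x) b ≥ 1 := by rw [hx]; have := hab.2; omega
  have hb3 : -D.θ (κ w) b ≥ 1 := by have := hwadj.2; omega
  rw [hS] at hle
  linarith


end GCP
end

section
/- Let P be a Γ-colored poset. Then P satisfies EC, NA, AC, and ICE2 if and only if P satisfies Green's properties G1, G2, and G5. -/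
namespace GCP

variable {Γ : Type*} [Fintype Γ] {P : Type*} [PartialOrder P] [LocallyFiniteOrder P]

private lemma rtg_le_s1 {r : P → P → Prop} (hr : ∀ u v, r u v → u ≤ v) {x y : P}
    (h : Relation.ReflTransGen r x y) : x ≤ y := by
  induction h with
  | refl => exact le_rfl
  | tail _ hstep ih => exact ih.trans (hr _ _ hstep)

private lemma covby_chain_aux : ∀ n : ℕ, ∀ x y : P, (Finset.Icc x y).card ≤ n → x ≤ y →
    Relation.ReflTransGen (fun u v : P => u ⋖ v) x y := by
  intro n
  induction n with
  | zero =>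
    intro x y hc h
    exact absurd hc (by simpa using Finset.card_pos.2 ⟨x, Finset.mem_Icc.2 ⟨le_rfl, h⟩⟩)
  | succ n ih =>
    intro x y hc h
    rcases h.eq_or_lt with rfl | hlt
    · exact Relation.ReflTransGen.refl
    · obtain ⟨z, hz, hmin⟩ := (Finset.Ioc x y).exists_minimal ⟨y, by simp [hlt]⟩
      rw [Finset.mem_Ioc] at hz
      have hcov : x ⋖ z := by
        refine ⟨hz.1, fun w hw hwz => ?_⟩
        exact hwz.not_ge (hmin (Finset.mem_Ioc.2 ⟨hw, hwz.le.trans hz.2⟩) hwz.le)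
      have hss : Finset.Icc z y ⊂ Finset.Icc x y := by
        refine ⟨Finset.Icc_subset_Icc_left hz.1.le, fun hsub => ?_⟩
        have := hsub (Finset.mem_Icc.2 ⟨le_rfl, hlt.le⟩)
        rw [Finset.mem_Icc] at this
        exact hz.1.not_ge this.1
      have hcard : (Finset.Icc z y).card ≤ n :=
        Nat.lt_succ_iff.1 (lt_of_lt_of_le (Finset.card_lt_card hss) hc)
      exact Relation.ReflTransGen.head hcov (ih z y hcard hz.2)

private lemma covby_chain {x y : P} (h : x ≤ y) :
    Relation.ReflTransGen (fun u v : P => u ⋖ v) x y :=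
  covby_chain_aux (Finset.Icc x y).card x y le_rfl h

private lemma step_of_covby {r : P → P → Prop} (hr : ∀ u v, r u v → u ≤ v) {x y : P}
    (hcov : x ⋖ y) (h : Relation.ReflTransGen r x y) : r x y := by
  suffices H : ∀ v, Relation.ReflTransGen r x v → v ≤ y → (v = x ∨ r x v) by
    rcases H y h le_rfl with rfl | h'
    · exact absurd hcov.lt (lt_irrefl _)
    · exact h'
  intro v hv
  induction hv with
  | refl => exact fun _ => Or.inl rfl
  | @tail u v hxu hstep ih =>
    intro hvy
    have huv := hr _ _ hstep
    have huy : u ≤ y := huv.trans hvy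
    rcases ih huy with rfl | hxu'
    · exact Or.inr hstep
    · have hxule : x ≤ u := hr _ _ hxu'
      rcases hcov.wcovBy.eq_or_eq hxule huy with rfl | rfl
      · exact Or.inr hstep
      · have : v = u := le_antisymm hvy huv
        exact Or.inr (this ▸ hxu')

private lemma Icc_sum_eq {x y : P} (h : x < y) (f : P → ℤ) :
    ∑ z ∈ Finset.Icc x y, f z = f x + f y + ∑ z ∈ Finset.Ioo x y, f z := by
  classical
  have hIcc : Finset.Icc x y = insert x (insert y (Finset.Ioo x y)) := by
    ext z
    simp only [Finset.mem_Icc, Finset.mem_insert, Finset.mem_Ioo]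
    constructor
    · rintro ⟨h1, h2⟩
      rcases h1.lt_or_eq with h1 | rfl
      · rcases h2.lt_or_eq with h2 | rfl
        · exact Or.inr (Or.inr ⟨h1, h2⟩)
        · exact Or.inr (Or.inl rfl)
      · exact Or.inl rfl
    · rintro (rfl | rfl | ⟨h1, h2⟩)
      · exact ⟨le_rfl, h.le⟩
      · exact ⟨h.le, le_rfl⟩
      · exact ⟨h1.le, h2.le⟩
  have hxni : x ∉ insert y (Finset.Ioo x y) := by
    simp only [Finset.mem_insert, Finset.mem_Ioo]
    rintro (rfl | ⟨h1, _⟩)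
    · exact absurd h (lt_irrefl _)
    · exact absurd h1 (lt_irrefl _)
  have hyni : y ∉ Finset.Ioo x y := by
    simp only [Finset.mem_Ioo]
    rintro ⟨_, h2⟩
    exact absurd h2 (lt_irrefl _)
  rw [hIcc, Finset.sum_insert hxni, Finset.sum_insert hyni]
  ring

/-- EC, NA, AC, ICE2 hold iff G1, G2, G5 hold. -/
theorem statement1 (D : DynkinDiagram Γ) (κ : P → Γ) (hsurj : Function.Surjective κ) :
    (EC κ ∧ NA D κ ∧ AC D κ ∧ ICE2 D κ) ↔ (G1 D κ ∧ G2 D κ ∧ G5 D κ) := by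
  constructor
  · rintro ⟨hEC, hNA, hAC, hICE⟩
    refine ⟨⟨fun a x hx y hy hne => hEC x y (hx.trans hy.symm), ?_⟩, ?_, ?_⟩
    · -- G1 second part
      rintro b c hbc x (hx | hx) y (hy | hy) hne
      · exact hEC x y (hx.trans hy.symm)
      · exact hAC x y (by rw [hx, hy]; exact hbc)
      · exact hAC x y (by rw [hx, hy]; exact hbc.symm)
      · exact hEC x y (hx.trans hy.symm)
    · -- G2
      intro x y hxy
      exact Relation.ReflTransGen.mono (fun u v (hc : u ⋖ v) => (⟨hc.le, Or.inr (hNA u v hc)⟩ : u ≤ v ∧ (κ u = κ v ∨ D.Adj (κ u) (κ v)))) x y (covby_chain hxy)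
    · -- G5
      intro a x y hcons
      obtain ⟨hlt, hx, hy, hzz⟩ := hcons
      have hI := hICE a x y ⟨hlt, hx, hy, hzz⟩
      rw [Finset.sum_neg_distrib] at hI
      have hIoo : ∑ z ∈ Finset.Ioo x y, D.θ (κ z) a = -2 := by linarith
      rw [Icc_sum_eq hlt, hx, hy, D.diag, hIoo]; norm_num
  · rintro ⟨⟨hG1a, hG1b⟩, hG2, hG5⟩
    have hEC : EC κ := by
      intro x y hxy
      rcases eq_or_ne x y with rfl | hne
      · exact Or.inl le_rfl
      · exact hG1a (κ x) rfl hxy.symm hne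
    have hNA : NA D κ := by
      intro x y hcov
      have hstep := step_of_covby (fun u v h => h.1) hcov (hG2 x y hcov.le)
      rcases hstep.2 with heq | hadj
      · -- equal colors: contradiction with G5
        exfalso
        have hIoo : Finset.Ioo x y = ∅ := by
          ext z
          simp only [Finset.mem_Ioo, Finset.notMem_empty, iff_false, not_and]
          exact fun h1 => hcov.2 h1
        have hcons : Consecutive κ (κ x) x y :=
          ⟨hcov.lt, rfl, heq.symm, fun z hz => by simp [hIoo] at hz⟩
        have := hG5 (κ x) x y hcons
        rw [Icc_sum_eq hcov.lt, hIoo, Finset.sum_empty, D.diag, ← heq, D.diag] at this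
        norm_num at this
      · exact hadj
    have hAC : AC D κ := by
      intro x y hadj
      rcases eq_or_ne x y with rfl | hne
      · exact Or.inl le_rfl
      · exact hG1b (κ x) (κ y) hadj (Or.inl rfl) (Or.inr rfl) hne
    refine ⟨hEC, hNA, hAC, ?_⟩
    intro a x y hcons
    obtain ⟨hlt, hx, hy, hzz⟩ := hcons
    have hI := hG5 a x y ⟨hlt, hx, hy, hzz⟩
    rw [Icc_sum_eq hlt, hx, hy, D.diag] at hI
    rw [Finset.sum_neg_distrib]
    linarith

end GCP
end

section
/- Let P be a Γ-colored poset. Then P satisfies EC, NA, AC, and ICE2 if and only if P satisfies Stembridge's properties S1 and S2. -/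
namespace GCP

variable {Γ : Type*} [Fintype Γ] {P : Type*} [PartialOrder P] [LocallyFiniteOrder P]

lemma exists_covby_le {x z : P} (h : x < z) : ∃ m, x ⋖ m ∧ m ≤ z := by
  obtain ⟨m, hm, hmin⟩ := (Finset.Ioc x z).exists_minimal ⟨z, by simp [h]⟩
  rw [Finset.mem_Ioc] at hm
  exact ⟨m, ⟨hm.1, fun t ht htm =>
    lt_irrefl _ (lt_of_lt_of_le htm (hmin (Finset.mem_Ioc.mpr ⟨ht, le_of_lt (lt_of_lt_of_le htm hm.2)⟩) htm.le))⟩, hm.2⟩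

lemma exists_le_covby {z y : P} (h : z < y) : ∃ m, z ≤ m ∧ m ⋖ y := by
  obtain ⟨m, hm, hmax⟩ := (Finset.Ico z y).exists_maximal ⟨z, by simp [h]⟩
  rw [Finset.mem_Ico] at hm
  exact ⟨m, hm.1, hm.2, fun t ht hty =>
    lt_irrefl _ (lt_of_lt_of_le ht (hmax (Finset.mem_Ico.mpr ⟨le_of_lt (lt_of_le_of_lt hm.1 ht), hty⟩) ht.le))⟩

open scoped Classical in
lemma sum_eq_filter_adj (D : DynkinDiagram Γ) (κ : P → Γ) (a : Γ) (x y : P)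
    (hc : ∀ z ∈ Finset.Ioo x y, κ z ≠ a) :
    ∑ z ∈ (Finset.Ioo x y).filter (fun z => D.Adj (κ z) a), (-D.θ (κ z) a)
      = ∑ z ∈ Finset.Ioo x y, (-D.θ (κ z) a) := by
  apply Finset.sum_filter_of_ne
  intro z hz hne
  have hza := hc z hz
  exact ⟨hza, lt_of_le_of_ne (D.offdiag_nonpos _ _ hza) (by omega)⟩

/-- EC, NA, AC, ICE2 hold iff S1 and S2 hold. -/
theorem statement2 (D : DynkinDiagram Γ) (κ : P → Γ) (hsurj : Function.Surjective κ) :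
    (EC κ ∧ NA D κ ∧ AC D κ ∧ ICE2 D κ) ↔ (S1 D κ ∧ S2 D κ) := by
  classical
  constructor
  · rintro ⟨hEC, hNA, hAC, hICE⟩
    constructor
    · constructor
      · intro x y hxy
        exact Or.inr (hNA x y hxy)
      · intro x y hxy hyx
        have hne : κ x ≠ κ y := fun h => by
          rcases hEC x y h with h' | h' <;> [exact hxy h'; exact hyx h']
        have hnadj : ¬ D.Adj (κ x) (κ y) := fun h => by
          rcases hAC x y h with h' | h' <;> [exact hxy h'; exact hyx h']
        refine ⟨hne, ?_⟩
        have := D.offdiag_nonpos (κ x) (κ y) hne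
        by_contra h0
        exact hnadj ⟨hne, lt_of_le_of_ne this h0⟩
    · intro a x y hcons
      obtain ⟨hxy, hx, hy, hop⟩ := hcons
      set T := (Finset.Ioo x y).filter (fun z => D.Adj (κ z) a) with hT
      have hsumT : ∑ z ∈ T, (-D.θ (κ z) a) = 2 := by
        rw [hT, sum_eq_filter_adj D κ a x y hop]
        exact hICE a x y ⟨hxy, hx, hy, hop⟩
      have hpos : ∀ z ∈ T, 1 ≤ -D.θ (κ z) a := by
        intro z hz
        have := (Finset.mem_filter.mp hz).2.2
        omega
      have hcard2 : T.card ≤ 2 := by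
        by_contra hc
        push_neg at hc
        have : (T.card : ℤ) * 1 ≤ ∑ z ∈ T, (-D.θ (κ z) a) := by
          have := Finset.card_nsmul_le_sum T (fun z => -D.θ (κ z) a) 1 hpos
          simpa using this
        rw [hsumT] at this
        have : (T.card : ℤ) ≤ 2 := by linarith
        exact_mod_cast (not_le.mpr hc) (by exact_mod_cast this)
      have hcard1 : 1 ≤ T.card := by
        by_contra hc
        push_neg at hc
        interval_cases h : T.card
        · rw [Finset.card_eq_zero] at h
          rw [h, Finset.sum_empty] at hsumT
          exact two_ne_zero hsumT.symm
      -- key: every element of T membership gives Ioo membership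
      have hTsub : ∀ z ∈ T, z ∈ Finset.Ioo x y := fun z hz => (Finset.mem_filter.mp hz).1
      interval_cases h : T.card
      · -- card 1 : case (ii)
        obtain ⟨w, hw⟩ := Finset.card_eq_one.mp h
        have hwT : w ∈ T := by rw [hw]; exact Finset.mem_singleton_self w
        have hwsum : -D.θ (κ w) a = 2 := by
          rw [hw, Finset.sum_singleton] at hsumT
          exact hsumT
        refine Or.inr ⟨w, ?_, by omega⟩
        have hwIoo := hTsub w hwT
        apply Finset.eq_singleton_iff_unique_mem.mpr
        refine ⟨hwIoo, fun z hz => ?_⟩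
        rw [Finset.mem_Ioo] at hz
        have h1 : w ≤ z := by
          obtain ⟨m, hcov, hmz⟩ := exists_covby_le hz.1
          have hmIoo : m ∈ Finset.Ioo x y :=
            Finset.mem_Ioo.mpr ⟨hcov.lt, lt_of_le_of_lt hmz hz.2⟩
          have hmT : m ∈ T := Finset.mem_filter.mpr ⟨hmIoo, by
            have := hNA x m hcov
            rw [hx] at this
            exact this.symm⟩
          rw [hw, Finset.mem_singleton] at hmT
          rwa [hmT] at hmz
        have h2 : z ≤ w := by
          obtain ⟨m, hzm, hcov⟩ := exists_le_covby hz.2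
          have hmIoo : m ∈ Finset.Ioo x y :=
            Finset.mem_Ioo.mpr ⟨lt_of_lt_of_le hz.1 hzm, hcov.lt⟩
          have hmT : m ∈ T := Finset.mem_filter.mpr ⟨hmIoo, by
            have := hNA m y hcov
            rwa [hy] at this⟩
          rw [hw, Finset.mem_singleton] at hmT
          rwa [hmT] at hzm
        exact le_antisymm h2 h1
      · -- card 2 : case (i)
        obtain ⟨u, v, huv, hT2⟩ := Finset.card_eq_two.mp h
        have huT : u ∈ T := by rw [hT2]; simp
        have hvT : v ∈ T := by rw [hT2]; simp
        have hsum2 : -D.θ (κ u) a + -D.θ (κ v) a = 2 := by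
          rw [hT2, Finset.sum_pair huv] at hsumT
          exact hsumT
        have hu1 := hpos u huT
        have hv1 := hpos v hvT
        refine Or.inl ⟨u, hTsub u huT, v, hTsub v hvT, huv, by omega, by omega, ?_⟩
        intro z hz hadj
        have : z ∈ T := Finset.mem_filter.mpr ⟨hz, hadj⟩
        rw [hT2] at this
        simpa using this
  · rintro ⟨⟨hS1a, hS1b⟩, hS2⟩
    have hEC : EC κ := by
      intro x y h
      by_contra hc
      push_neg at hc
      exact (hS1b x y hc.1 hc.2).1 h
    have hAC : AC D κ := by
      intro x y h
      by_contra hc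
      push_neg at hc
      exact absurd (hS1b x y hc.1 hc.2).2 h.2.ne
    have hNA : NA D κ := by
      intro x y hxy
      rcases hS1a x y hxy with h | h
      · exfalso
        have hIoo : Finset.Ioo x y = ∅ := by
          apply Finset.eq_empty_of_forall_notMem
          intro z hz
          rw [Finset.mem_Ioo] at hz
          exact hxy.2 hz.1 hz.2
        have hcons : Consecutive κ (κ y) x y :=
          ⟨hxy.lt, h, rfl, by rw [hIoo]; intro z hz; simp at hz⟩
        rcases hS2 (κ y) x y hcons with ⟨u, hu, _⟩ | ⟨w, hw, _⟩
        · rw [hIoo] at hu; simp at hu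
        · rw [hIoo] at hw
          exact (Finset.singleton_ne_empty w) hw.symm
      · exact h
    refine ⟨hEC, hNA, hAC, ?_⟩
    intro a x y hcons
    obtain ⟨hxy, hx, hy, hop⟩ := hcons
    rw [← sum_eq_filter_adj D κ a x y hop]
    rcases hS2 a x y ⟨hxy, hx, hy, hop⟩ with
      ⟨u, hu, v, hv, huv, hθu, hθv, hall⟩ | ⟨w, hw, hθw⟩
    · have huA : D.Adj (κ u) a := ⟨fun h => by rw [h, D.diag] at hθu; omega, by omega⟩
      have hvA : D.Adj (κ v) a := ⟨fun h => by rw [h, D.diag] at hθv; omega, by omega⟩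
      have : (Finset.Ioo x y).filter (fun z => D.Adj (κ z) a) = {u, v} := by
        apply Finset.Subset.antisymm
        · intro z hz
          rw [Finset.mem_filter] at hz
          rcases hall z hz.1 hz.2 with h | h <;> simp [h]
        · intro z hz
          rw [Finset.mem_insert, Finset.mem_singleton] at hz
          rcases hz with h | h <;> subst h <;> exact Finset.mem_filter.mpr ⟨by assumption, by assumption⟩
      rw [this, Finset.sum_pair huv, hθu, hθv]
      norm_num
    · have hwA : D.Adj (κ w) a := ⟨fun h => by rw [h, D.diag] at hθw; omega, by omega⟩
      have : (Finset.Ioo x y).filter (fun z => D.Adj (κ z) a) = {w} := by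
        rw [hw]
        apply Finset.filter_eq_self.mpr
        intro z hz
        rw [Finset.mem_singleton] at hz
        rwa [hz]
      rw [this, Finset.sum_singleton, hθw]
      norm_num

end GCP
end

section
/- Let P be a finite Γ-colored poset that satisfies NA. If P satisfies Stembridge's properties S3 and S4, then P satisfies UCB1. -/
namespace GCP

variable {Γ : Type*} [Fintype Γ] {P : Type*} [PartialOrder P] [LocallyFiniteOrder P]

private lemma chain_path [Finite P] (D : DynkinDiagram Γ) (κ : P → Γ)
    (hNA : NA D κ) (hS3 : S3 D κ) :
    ∀ n : ℕ, ∀ x y : P, (Finset.Ioc x y).card ≤ n →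
      (∀ z : P, κ z = κ x → ¬ x < z) → x < y →
      ∃ p : D.graph.Walk (κ x) (κ y), p.IsPath ∧ 0 < p.length ∧
        (∀ z : P, κ z = κ y → ¬ y < z) ∧
        (∀ c ∈ p.support.tail, ∃ w, x < w ∧ w ≤ y ∧ κ w = c) := by
  intro n
  induction n with
  | zero =>
    intro x y hcard _ hxy
    exact absurd (Finset.card_pos.mpr ⟨y, Finset.mem_Ioc.mpr ⟨hxy, le_rfl⟩⟩)
      (by omega)
  | succ n ih =>
    intro x y hcard hmax hxy
    haveI : IsStronglyAtomic P := IsStronglyAtomic.of_wellFounded_lt wellFounded_lt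
    obtain ⟨z, hcov, hzy⟩ := exists_covBy_le_of_lt hxy
    have hadj : D.graph.Adj (κ x) (κ z) := hNA x z hcov
    have hzmax : ∀ w : P, κ w = κ z → ¬ z < w := ((hS3 x hmax).2 z hcov).2
    rcases eq_or_lt_of_le hzy with rfl | hzy'
    · refine ⟨SimpleGraph.Walk.cons hadj SimpleGraph.Walk.nil, ?_, by simp, hzmax, ?_⟩
      · simpa using (SimpleGraph.Path.singleton hadj).2
      · intro c hc
        simp only [SimpleGraph.Walk.support_cons, SimpleGraph.Walk.support_nil,
          List.tail_cons, List.mem_singleton] at hc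
        exact ⟨z, hcov.lt, le_rfl, hc ▸ rfl⟩
    · have hsub : Finset.Ioc z y ⊂ Finset.Ioc x y := by
        refine Finset.ssubset_iff_of_subset (fun w hw => ?_) |>.mpr
          ⟨z, Finset.mem_Ioc.mpr ⟨hcov.lt, hzy⟩, by simp⟩
        rw [Finset.mem_Ioc] at hw ⊢
        exact ⟨hcov.lt.trans hw.1, hw.2⟩
      obtain ⟨q, hqpath, hqlen, hymax, hqsupp⟩ :=
        ih z y (by have := Finset.card_lt_card hsub; omega) hzmax hzy'
      have hsupp' : ∀ c ∈ q.support, ∃ w, z ≤ w ∧ w ≤ y ∧ κ w = c := by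
        intro c hc
        rw [q.support_eq_cons, List.mem_cons] at hc
        rcases hc with rfl | hc
        · exact ⟨z, le_rfl, hzy, rfl⟩
        · obtain ⟨w, h1, h2, h3⟩ := hqsupp c hc
          exact ⟨w, h1.le, h2, h3⟩
      have hnotin : κ x ∉ q.support := by
        intro hmem
        obtain ⟨w, hzw, _, hw⟩ := hsupp' _ hmem
        exact hmax w hw (hcov.lt.trans_le hzw)
      refine ⟨SimpleGraph.Walk.cons hadj q, hqpath.cons hnotin, by simp, hymax, ?_⟩
      intro c hc
      simp only [SimpleGraph.Walk.support_cons, List.tail_cons] at hc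
      obtain ⟨w, h1, h2, h3⟩ := hsupp' c hc
      exact ⟨w, hcov.lt.trans_le h1, h2, h3⟩

/-- a finite Γ-colored poset satisfying NA, S3, and S4 satisfies
UCB1. -/
theorem statement4 [Finite P] (D : DynkinDiagram Γ) (κ : P → Γ)
    (hsurj : Function.Surjective κ) (hNA : NA D κ) (hS3 : S3 D κ) (hS4 : S4 D) :
    UCB D κ 1 := by
  intro x hmax
  haveI : IsStronglyAtomic P := IsStronglyAtomic.of_wellFounded_lt wellFounded_lt
  have hfin : (USet D κ Set.univ x).Finite := Set.toFinite _
  refine ⟨hfin, ?_⟩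
  by_cases hcov : ∃ z : P, x ⋖ z
  · obtain ⟨y1, hy1⟩ := hcov
    have hθ : D.θ (κ y1) (κ x) = -1 := ((hS3 x hmax).2 y1 hy1).1
    have hsub : hfin.toFinset ⊆ {y1} := by
      intro y hy
      rw [Set.Finite.mem_toFinset] at hy
      obtain ⟨-, hxy, hadjy⟩ := hy
      obtain ⟨z, hczv, hzy⟩ := exists_covBy_le_of_lt hxy
      have hz1 : z = y1 := (hS3 x hmax).1 z y1 hczv hy1
      subst hz1
      rcases eq_or_lt_of_le hzy with rfl | hlt
      · simp
      · exfalso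
        have hzmax := ((hS3 x hmax).2 z hczv).2
        obtain ⟨q, hqpath, hqlen, -, hqsupp⟩ :=
          chain_path D κ hNA hS3 (Finset.Ioc z y).card z y le_rfl hzmax hlt
        have hadjxz : D.graph.Adj (κ x) (κ z) := hNA x z hczv
        have hnotin : κ x ∉ q.support := by
          intro hmem
          rw [q.support_eq_cons, List.mem_cons] at hmem
          rcases hmem with h | h
          · exact hadjxz.ne h
          · obtain ⟨w, hzw, -, hw⟩ := hqsupp _ h
            exact hmax w hw (hczv.lt.trans hzw)
        have hp : (SimpleGraph.Walk.cons hadjxz q).IsPath := hqpath.cons hnotin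
        have hadj' : D.graph.Adj (κ x) (κ y) := hadjy.symm
        have huniq := SimpleGraph.isAcyclic_iff_path_unique.mp hS4
          ⟨_, hp⟩ (SimpleGraph.Path.singleton hadj')
        have hlen := congrArg (fun r : D.graph.Path (κ x) (κ y) => r.1.length) huniq
        simp [SimpleGraph.Path.singleton] at hlen
        rw [SimpleGraph.Walk.nil_iff_length_eq] at hlen
        omega
    calc ∑ y ∈ hfin.toFinset, (-D.θ (κ y) (κ x))
        ≤ ∑ y ∈ {y1}, (-D.θ (κ y) (κ x)) := by
          refine Finset.sum_le_sum_of_subset_of_nonneg hsub (fun i hi _ => ?_)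
          simp only [Finset.mem_singleton] at hi
          subst hi
          rw [hθ]; norm_num
      _ ≤ (1 : ℤ) := by rw [Finset.sum_singleton, hθ]; norm_num
  · have : hfin.toFinset = ∅ := by
      ext y
      simp only [Set.Finite.mem_toFinset, Finset.notMem_empty, iff_false]
      rintro ⟨-, hxy, -⟩
      obtain ⟨z, hczv, -⟩ := exists_covBy_le_of_lt hxy
      exact hcov ⟨z, hczv⟩
    rw [this, Finset.sum_empty]
    norm_num

end GCP
end

section
/- Let P be a finite Γ-colored poset that satisfies NA. If P satisfies UCB1 and also AC, then P satisfies Stembridge's properties S3 and S4. -/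
namespace GCP

variable {Γ : Type*} [Fintype Γ] {P : Type*} [PartialOrder P] [LocallyFiniteOrder P]

/-! ### Auxiliary lemmas for statement 5 -/

section Aux

lemma aux_one_le_neg {D : DynkinDiagram Γ} {a b : Γ} (h : D.Adj a b) :
    (1 : ℤ) ≤ -D.θ a b := by
  have := h.2; omega

lemma aux_mem_USet {D : DynkinDiagram Γ} {κ : P → Γ} {x u : P}
    (h1 : x < u) (h2 : D.Adj (κ u) (κ x)) : u ∈ USet D κ Set.univ x :=
  ⟨Set.mem_univ u, h1, h2⟩

lemma aux_two_mem_USet_false (D : DynkinDiagram Γ) (κ : P → Γ)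
    (hUCB : UCB D κ 1) {x u v : P} (hx : ∀ y : P, κ y = κ x → ¬ x < y)
    (hu : u ∈ USet D κ Set.univ x) (hv : v ∈ USet D κ Set.univ x)
    (huv : u ≠ v) : False := by
  classical
  obtain ⟨hfin, hsum⟩ := hUCB x hx
  have hterm : ∀ w ∈ hfin.toFinset, (1 : ℤ) ≤ -D.θ (κ w) (κ x) := by
    intro w hw
    rw [Set.Finite.mem_toFinset] at hw
    exact aux_one_le_neg hw.2.2
  have hsub : ({u, v} : Finset P) ⊆ hfin.toFinset := by
    intro w hw
    simp only [Finset.mem_insert, Finset.mem_singleton] at hw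
    rcases hw with rfl | rfl <;> rw [Set.Finite.mem_toFinset] <;> assumption
  have h2 : (2 : ℤ) ≤ ∑ y ∈ hfin.toFinset, (-D.θ (κ y) (κ x)) := by
    have hpair : (2 : ℤ) ≤ ∑ y ∈ ({u, v} : Finset P), (-D.θ (κ y) (κ x)) := by
      rw [Finset.sum_pair huv]
      have h1 := hterm u (hsub (by simp))
      have h2' := hterm v (hsub (by simp))
      omega
    refine le_trans hpair (Finset.sum_le_sum_of_subset_of_nonneg hsub ?_)
    intro w hw _
    exact le_trans zero_le_one (hterm w hw)
  push_cast at hsum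
  linarith

lemma aux_theta_eq_neg_one (D : DynkinDiagram Γ) (κ : P → Γ)
    (hUCB : UCB D κ 1) {x u : P} (hx : ∀ y : P, κ y = κ x → ¬ x < y)
    (hu : u ∈ USet D κ Set.univ x) : D.θ (κ u) (κ x) = -1 := by
  classical
  obtain ⟨hfin, hsum⟩ := hUCB x hx
  have hmem : u ∈ hfin.toFinset := hfin.mem_toFinset.mpr hu
  have hle : -D.θ (κ u) (κ x) ≤ ∑ y ∈ hfin.toFinset, (-D.θ (κ y) (κ x)) := by
    refine Finset.single_le_sum (f := fun y => -D.θ (κ y) (κ x)) ?_ hmem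
    intro w hw
    rw [Set.Finite.mem_toFinset] at hw
    exact le_trans zero_le_one (aux_one_le_neg hw.2.2)
  have h1 : D.θ (κ u) (κ x) < 0 := hu.2.2.2
  push_cast at hsum
  linarith

/-- `support[i] = getVert i` for walks. -/
lemma aux_support_getElem {V : Type*} {G : SimpleGraph V} :
    ∀ {u v : V} (p : G.Walk u v) (i : ℕ) (h : i < p.support.length),
      p.support[i] = p.getVert i := by
  intro u v p
  induction p with
  | nil =>
      intro i h
      simp only [SimpleGraph.Walk.support_nil, List.length_cons, List.length_nil] at h
      have h0 : i = 0 := by omega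
      subst h0
      simp [SimpleGraph.Walk.getVert_zero]
  | cons hadj q ih =>
      intro i h
      cases i with
      | zero => simp [SimpleGraph.Walk.getVert_zero]
      | succ j =>
          simp only [SimpleGraph.Walk.support_cons, List.getElem_cons_succ,
            SimpleGraph.Walk.getVert_cons_succ]
          exact ih j (by simpa [SimpleGraph.Walk.support_cons] using h)

/-- Vertices of a cycle at positions `1, …, length` are pairwise distinct. -/
lemma aux_cycle_getVert_inj {V : Type*} {G : SimpleGraph V} {v : V}
    {c : G.Walk v v} (hc : c.IsCycle) {i j : ℕ}
    (hi1 : 1 ≤ i) (hi2 : i ≤ c.length) (hj1 : 1 ≤ j) (hj2 : j ≤ c.length)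
    (h : c.getVert i = c.getVert j) : i = j := by
  have hnd : c.support.tail.Nodup := hc.support_nodup
  have hlen : c.support.length = c.length + 1 := c.length_support
  have htlen : c.support.tail.length = c.length := by
    rw [List.length_tail, hlen]
    omega
  have key : ∀ k : ℕ, 1 ≤ k → k ≤ c.length →
      ∀ hk : k - 1 < c.support.tail.length, c.support.tail[k - 1] = c.getVert k := by
    intro k hk1 hk2 hk
    have h1 : k - 1 + 1 < c.support.length := by omega
    have := List.getElem_tail (l := c.support) (i := k - 1) (h := hk)
    rw [this]
    have h2 : k - 1 + 1 = k := by omega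
    simp_rw [h2]
    exact aux_support_getElem c k (by omega)
  have hi' : i - 1 < c.support.tail.length := by omega
  have hj' : j - 1 < c.support.tail.length := by omega
  have e1 : c.support.tail[i - 1]'hi' = c.getVert i := key i hi1 hi2 hi'
  have e2 : c.support.tail[j - 1]'hj' = c.getVert j := key j hj1 hj2 hj'
  have : i - 1 = j - 1 :=
    (List.Nodup.getElem_inj_iff hnd (hi := hi') (hj := hj')).mp (by rw [e1, e2]; exact h)
  omega

end Aux

/-- a finite Γ-colored poset satisfying NA, UCB1, and AC
satisfies S3 and S4. -/
theorem statement5 [Finite P] (D : DynkinDiagram Γ) (κ : P → Γ)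
    (hsurj : Function.Surjective κ) (hNA : NA D κ) (hUCB : UCB D κ 1) (hAC : AC D κ) :
    S3 D κ ∧ S4 D := by
  classical
  have _inst : Fintype P := Fintype.ofFinite P
  constructor
  · -- S3
    intro x hx
    constructor
    · intro y z hy hz
      by_contra hne
      exact aux_two_mem_USet_false D κ hUCB hx
        (aux_mem_USet hy.lt (hNA x y hy).symm)
        (aux_mem_USet hz.lt (hNA x z hz).symm) hne
    · intro y hy
      have hyU := aux_mem_USet hy.lt (hNA x y hy).symm
      refine ⟨aux_theta_eq_neg_one D κ hUCB hx hyU, ?_⟩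
      intro z hz hlt
      have hzU : z ∈ USet D κ Set.univ x :=
        aux_mem_USet (lt_trans hy.lt hlt) (by rw [hz]; exact (hNA x y hy).symm)
      exact aux_two_mem_USet_false D κ hUCB hx hzU hyU
        (by rintro rfl; exact lt_irrefl z hlt)
  · -- S4
    intro v c hc
    set n := c.length with hn_def
    have hn : 3 ≤ n := hc.three_le_length
    have hnpos : 0 < n := by omega
    have hgl : c.getVert n = v := c.getVert_length
    have hg0 : c.getVert 0 = v := c.getVert_zero
    -- for each color, a maximal element of that color class
    have hg : ∀ γ : Γ, ∃ m : P, κ m = γ ∧ ∀ z : P, κ z = γ → ¬ m < z := by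
      intro γ
      obtain ⟨p0, hp0⟩ := hsurj γ
      obtain ⟨m, hm, hmax⟩ : ∃ m ∈ (Finset.univ.filter fun z : P => κ z = γ),
          ∀ x ∈ (Finset.univ.filter fun z : P => κ z = γ), ¬ m < x := by
        obtain ⟨m, hm⟩ := Finset.exists_maximal
          (s := Finset.univ.filter fun z : P => κ z = γ) ⟨p0, by simp [hp0]⟩
        exact ⟨m, hm.1, fun x hx hlt => lt_irrefl _ (lt_of_lt_of_le hlt (hm.2 hx hlt.le))⟩
      exact ⟨m, by simpa using hm, fun z hz => hmax z (by simp [hz])⟩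
    choose g hgc hgm using hg
    set b : ℕ → Γ := fun i => c.getVert (i % n) with hb_def
    set Y : ℕ → P := fun i => g (b i) with hY_def
    have hYc : ∀ i, κ (Y i) = b i := fun i => hgc (b i)
    have hYm : ∀ i, ∀ z : P, κ z = κ (Y i) → ¬ Y i < z := by
      intro i z hz
      exact hgm (b i) z (by rw [hz, hYc])
    -- adjacency around the cycle
    have hadj : ∀ i : ℕ, D.Adj (b i) (b (i + 1)) := by
      intro i
      have hlt : i % n < n := Nat.mod_lt _ hnpos
      have hmod : (i + 1) % n = (i % n + 1) % n := by
        conv_lhs => rw [Nat.add_mod]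
        rw [Nat.mod_eq_of_lt (show 1 < n by omega)]
      show D.Adj (c.getVert (i % n)) (c.getVert ((i + 1) % n))
      by_cases h : i % n + 1 = n
      · have h0 : (i + 1) % n = 0 := by rw [hmod, h, Nat.mod_self]
        rw [h0, hg0]
        have := c.adj_getVert_succ (i := i % n) (by omega)
        rw [h, hgl] at this
        exact this
      · have h1 : (i + 1) % n = i % n + 1 := by rw [hmod, Nat.mod_eq_of_lt (by omega)]
        rw [h1]
        exact c.adj_getVert_succ (by omega)
    -- distinct residues give distinct colors
    have hbinj : ∀ i j : ℕ, i % n ≠ j % n → b i ≠ b j := by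
      intro i j hne heq
      set r : ℕ → ℕ := fun k => if k % n = 0 then n else k % n with hr_def
      have hgr : ∀ k, c.getVert (r k) = b k := by
        intro k
        show c.getVert (r k) = c.getVert (k % n)
        by_cases h : k % n = 0
        · simp only [hr_def, if_pos h, h, hg0]
          exact hgl
        · simp only [hr_def, if_neg h]
      have hri : ∀ k, 1 ≤ r k ∧ r k ≤ n := by
        intro k
        have := Nat.mod_lt k hnpos
        by_cases h : k % n = 0 <;> simp only [hr_def, if_pos, if_neg, h, if_true,
          if_false, ite_true, ite_false] <;> omega
      have hrij : r i = r j := by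
        refine aux_cycle_getVert_inj hc (hri i).1 (hri i).2 (hri j).1 (hri j).2 ?_
        rw [hgr, hgr]
        exact heq
      have hi' := Nat.mod_lt i hnpos
      have hj' := Nat.mod_lt j hnpos
      by_cases h1 : i % n = 0 <;> by_cases h2 : j % n = 0 <;>
        simp only [hr_def, h1, h2, if_true, if_false, ite_true, ite_false] at hrij <;>
        omega
    -- pick a minimal element among the maximal color representatives on the cycle
    have hmem : ∀ i : ℕ, Y i ∈ Finset.image Y (Finset.range n) := by
      intro i
      refine Finset.mem_image.mpr ⟨i % n, Finset.mem_range.mpr (Nat.mod_lt _ hnpos), ?_⟩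
      have hb' : b (i % n) = b i := by
        show c.getVert (i % n % n) = c.getVert (i % n)
        rw [Nat.mod_mod_of_dvd i dvd_rfl]
      show g (b (i % n)) = g (b i)
      exact congrArg g hb'
    obtain ⟨m, hmT, hmmin⟩ : ∃ m ∈ Finset.image Y (Finset.range n),
        ∀ x ∈ Finset.image Y (Finset.range n), ¬ x < m := by
      obtain ⟨m, hm⟩ := Finset.exists_minimal (s := Finset.image Y (Finset.range n)) ⟨Y 0, hmem 0⟩
      exact ⟨m, hm.1, fun x hx hlt => lt_irrefl _ (lt_of_lt_of_le hlt (hm.2 hx hlt.le))⟩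
    obtain ⟨k, hk, hkm⟩ := Finset.mem_image.mp hmT
    have hbk : b (k + n) = b k := by
      show c.getVert ((k + n) % n) = c.getVert (k % n)
      rw [Nat.add_mod_right]
    have hsucc : (k + n - 1) + 1 = k + n := by omega
    -- the two cycle-neighbors of m's color
    have hadj_u : D.Adj (κ (Y (k + n - 1))) (κ m) := by
      rw [← hkm, hYc, hYc]
      have := hadj (k + n - 1)
      rw [hsucc, hbk] at this
      exact this
    have hadj_w : D.Adj (κ (Y (k + 1))) (κ m) := by
      rw [← hkm, hYc, hYc]
      exact (hadj k).symm
    have hne_u : Y (k + n - 1) ≠ m := fun he => hadj_u.1 (by rw [he])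
    have hne_w : Y (k + 1) ≠ m := fun he => hadj_w.1 (by rw [he])
    have hlt_u : m < Y (k + n - 1) := by
      rcases hAC _ _ hadj_u with h | h
      · exact absurd (lt_of_le_of_ne h hne_u) (hmmin _ (hmem (k + n - 1)))
      · exact lt_of_le_of_ne h (fun he => hne_u he.symm)
    have hlt_w : m < Y (k + 1) := by
      rcases hAC _ _ hadj_w with h | h
      · exact absurd (lt_of_le_of_ne h hne_w) (hmmin _ (hmem (k + 1)))
      · exact lt_of_le_of_ne h (fun he => hne_w he.symm)
    have hne_uw : Y (k + n - 1) ≠ Y (k + 1) := by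
      intro he
      have hcol : b (k + n - 1) = b (k + 1) := by
        rw [← hYc, ← hYc, he]
      refine hbinj (k + n - 1) (k + 1) ?_ hcol
      intro hmodeq
      have h1 : (k + 1) ≡ (k + n - 1) [MOD n] := hmodeq.symm
      have h2 : n ∣ (k + n - 1) - (k + 1) := (Nat.modEq_iff_dvd' (by omega)).mp h1
      have h3 : (k + n - 1) - (k + 1) = n - 2 := by omega
      rw [h3] at h2
      have := Nat.le_of_dvd (by omega) h2
      omega
    have hmmax : ∀ z : P, κ z = κ m → ¬ m < z := by
      rw [← hkm]; exact hYm k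
    exact aux_two_mem_USet_false D κ hUCB hmmax
      (aux_mem_USet hlt_u hadj_u) (aux_mem_USet hlt_w hadj_w) hne_uw

end GCP
end

section
/- Let P be a Γ-colored d-complete poset, let I be an order ideal of P, let F = P − I be the corresponding order filter, and let a be a color. Suppose the upper frontier census U_a(I) is defined (i.e., P_a ∩ I has a maximal element x and U(x,I) is finite). Then (i) U_a(I) ∈ {0,1,2}, and (ii) U_a(I) = 2 if and only if F contains an element of color a that is a minimal element of F. -/
namespace GCP

variable {Γ : Type*} [Fintype Γ] {P : Type*} [PartialOrder P] [LocallyFiniteOrder P]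

/-- the upper frontier census of an ideal, when defined, lies in
`{0,1,2}`, and equals `2` iff the complementary filter has a minimal element of
color `a`. -/
theorem statement7 (D : DynkinDiagram Γ) (κ : P → Γ) (hsurj : Function.Surjective κ)
    (hdc : DComplete D κ) (I : Set P) (hI : IsLowerSet I) (a : Γ) (x : P)
    (hxI : x ∈ I) (hxa : κ x = a) (hxmax : ∀ y ∈ I, κ y = a → ¬ x < y)
    (hfin : (USet D κ I x).Finite) :
    (∑ y ∈ hfin.toFinset, (-D.θ (κ y) a)) ∈ ({0, 1, 2} : Set ℤ) ∧
      ((∑ y ∈ hfin.toFinset, (-D.θ (κ y) a)) = 2 ↔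
        ∃ y ∈ Iᶜ, κ y = a ∧ ∀ z ∈ Iᶜ, ¬ z < y) := by
  classical
  obtain ⟨hEC, hNA, hAC, hICE2, hUCB⟩ := hdc
  -- membership in USet
  have hmemU : ∀ z : P, z ∈ hfin.toFinset ↔ z ∈ I ∧ x < z ∧ D.Adj (κ z) a := by
    intro z
    rw [Set.Finite.mem_toFinset]
    simp [USet, hxa]
    tauto
  by_cases hcase : ∃ y : P, κ y = a ∧ x < y
  · -- Case 2: there is an element of color a above x
    obtain ⟨y₀, hy₀a, hy₀x⟩ := hcase
    -- pick a minimal element of color a above x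
    set C : Finset P := (Finset.Ioc x y₀).filter (fun z => κ z = a) with hC
    have hCne : C.Nonempty := ⟨y₀, by simp [hC, hy₀x, hy₀a]⟩
    obtain ⟨y', hy'C, hy'min⟩ := C.exists_minimal hCne
    have hy'mem := Finset.mem_filter.mp hy'C
    have hy'a : κ y' = a := hy'mem.2
    have hxy' : x < y' := (Finset.mem_Ioc.mp hy'mem.1).1
    have hnomid : ∀ z ∈ Finset.Ioo x y', κ z ≠ a := by
      intro z hz hza
      rcases Finset.mem_Ioo.mp hz with ⟨h1, h2⟩
      exact lt_irrefl z (h2.trans_le (hy'min (Finset.mem_filter.mpr ⟨Finset.mem_Ioc.mpr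
        ⟨h1, h2.le.trans (Finset.mem_Ioc.mp hy'mem.1).2⟩, hza⟩) h2.le))
    have hcons : Consecutive κ a x y' := ⟨hxy', hxa, hy'a, hnomid⟩
    have htot : ∑ z ∈ Finset.Ioo x y', (-D.θ (κ z) a) = 2 := hICE2 a x y' hcons
    have hy'F : y' ∉ I := fun h => hxmax y' h hy'a hxy'
    -- identify the census finset with a filter of the open interval
    have hset : hfin.toFinset =
        (Finset.Ioo x y').filter (fun z => z ∈ I ∧ D.Adj (κ z) a) := by
      ext z
      rw [hmemU, Finset.mem_filter, Finset.mem_Ioo]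
      constructor
      · rintro ⟨hzI, hxz, hadj⟩
        have hcomp : z ≤ y' ∨ y' ≤ z := by
          apply hAC
          rw [hy'a]; exact hadj
        have hzy' : z < y' := by
          rcases hcomp with h | h
          · exact lt_of_le_of_ne h (fun he => hy'F (he ▸ hzI))
          · exact absurd (hI h hzI) hy'F
        exact ⟨⟨hxz, hzy'⟩, hzI, hadj⟩
      · rintro ⟨⟨h1, _⟩, hzI, hadj⟩
        exact ⟨hzI, h1, hadj⟩
    -- nonnegativity of terms on the open interval
    have hnn : ∀ z ∈ Finset.Ioo x y', 0 ≤ -D.θ (κ z) a := by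
      intro z hz
      have := D.offdiag_nonpos (κ z) a (hnomid z hz)
      omega
    have hsub : hfin.toFinset ⊆ Finset.Ioo x y' := by
      rw [hset]; exact Finset.filter_subset _ _
    have hle2 : (∑ y ∈ hfin.toFinset, (-D.θ (κ y) a)) ≤ 2 := by
      rw [← htot]
      exact Finset.sum_le_sum_of_subset_of_nonneg hsub (fun z hz _ => hnn z hz)
    have hge0 : 0 ≤ (∑ y ∈ hfin.toFinset, (-D.θ (κ y) a)) :=
      Finset.sum_nonneg (fun z hz => hnn z (hsub hz))
    -- splitting the total sum
    have hsplit : (∑ y ∈ hfin.toFinset, (-D.θ (κ y) a)) +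
        ∑ z ∈ (Finset.Ioo x y').filter (fun z => ¬(z ∈ I ∧ D.Adj (κ z) a)),
          (-D.θ (κ z) a) = 2 := by
      rw [hset, ← htot]
      exact Finset.sum_filter_add_sum_filter_not _ _ _
    refine ⟨?_, ?_, ?_⟩
    · simp only [Set.mem_insert_iff, Set.mem_singleton_iff]
      omega
    · -- census = 2 → y' is a minimal element of the filter of color a
      intro h2
      have hrest : ∑ z ∈ (Finset.Ioo x y').filter
          (fun z => ¬(z ∈ I ∧ D.Adj (κ z) a)), (-D.θ (κ z) a) = 0 := by omega
      have hallI : ∀ z ∈ Finset.Ioo x y', D.Adj (κ z) a → z ∈ I := by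
        intro z hz hadj
        by_contra hzI
        have hzmem : z ∈ (Finset.Ioo x y').filter
            (fun z => ¬(z ∈ I ∧ D.Adj (κ z) a)) :=
          Finset.mem_filter.mpr ⟨hz, fun h => hzI h.1⟩
        have h0 : -D.θ (κ z) a = 0 :=
          (Finset.sum_eq_zero_iff_of_nonneg
            (fun w hw => hnn w (Finset.mem_filter.mp hw).1)).mp hrest z hzmem
        have := hadj.2
        omega
      refine ⟨y', hy'F, hy'a, ?_⟩
      intro z hzF hzy'
      -- find a maximal element of the filter below y' above z
      set S : Finset P := (Finset.Ico z y').filter (fun w => w ∉ I) with hS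
      have hSne : S.Nonempty := ⟨z, by simp [hS, hzy', hzF.out]⟩
      obtain ⟨z'', hz''S, hz''max⟩ := S.exists_maximal hSne
      have hz''mem := Finset.mem_filter.mp hz''S
      have hz''F : z'' ∉ I := hz''mem.2
      have hz''lt : z'' < y' := (Finset.mem_Ico.mp hz''mem.1).2
      have hz''z : z ≤ z'' := (Finset.mem_Ico.mp hz''mem.1).1
      -- find a cover of z'' below y'
      obtain ⟨w, hwIoc, hwmin⟩ := (Finset.Ioc z'' y').exists_minimal
        ⟨y', Finset.mem_Ioc.mpr ⟨hz''lt, le_refl _⟩⟩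
      rcases Finset.mem_Ioc.mp hwIoc with ⟨hz''w, hwy'⟩
      have hcov : z'' ⋖ w := by
        refine ⟨hz''w, fun v hv1 hv2 => ?_⟩
        exact lt_irrefl v (hv2.trans_le (hwmin (Finset.mem_Ioc.mpr ⟨hv1, hv2.le.trans hwy'⟩) hv2.le))
      have hwF : w ∉ I := fun h => hz''F (hI hz''w.le h)
      have hwy : w = y' := by
        by_contra hne
        have hwlt : w < y' := lt_of_le_of_ne hwy' hne
        exact lt_irrefl z'' (hz''w.trans_le (hz''max (Finset.mem_filter.mpr
          ⟨Finset.mem_Ico.mpr ⟨hz''z.trans hz''w.le, hwlt⟩, hwF⟩) hz''w.le))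
      have hadj : D.Adj (κ z'') a := by
        have := hNA z'' w (hwy ▸ hcov)
        rwa [hwy, hy'a] at this
      have hxz'' : x < z'' := by
        have hcomp : z'' ≤ x ∨ x ≤ z'' := by
          apply hAC
          rw [hxa]; exact hadj
        rcases hcomp with h | h
        · exact absurd (hI h hxI) hz''F
        · exact lt_of_le_of_ne h (fun he => hz''F (he ▸ hxI))
      exact hz''F (hallI z'' (Finset.mem_Ioo.mpr ⟨hxz'', hz''lt⟩) hadj)
    · -- a minimal element of color a in the filter → census = 2
      rintro ⟨w, hwF, hwa, hwmin⟩
      -- w = y'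
      have hxw : x < w := by
        rcases hEC x w (hxa.trans hwa.symm) with h | h
        · exact lt_of_le_of_ne h (fun he => hwF (he ▸ hxI))
        · exact absurd (hI h hxI) hwF
      have hwy' : w = y' := by
        rcases hEC w y' (hwa.trans hy'a.symm) with h | h
        · rcases lt_or_eq_of_le h with h' | h'
          · exact absurd hwa (hnomid w (Finset.mem_Ioo.mpr ⟨hxw, h'⟩))
          · exact h'
        · rcases lt_or_eq_of_le h with h' | h'
          · exact absurd h' (hwmin y' hy'F)
          · exact h'.symm
      have hIooI : ∀ z ∈ Finset.Ioo x y', z ∈ I := by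
        intro z hz
        by_contra hzF
        exact hwmin z hzF (hwy' ▸ (Finset.mem_Ioo.mp hz).2)
      have hrest0 : ∑ z ∈ (Finset.Ioo x y').filter
          (fun z => ¬(z ∈ I ∧ D.Adj (κ z) a)), (-D.θ (κ z) a) = 0 := by
        apply Finset.sum_eq_zero
        intro z hz
        rcases Finset.mem_filter.mp hz with ⟨hzIoo, hznot⟩
        have hzI := hIooI z hzIoo
        have hnadj : ¬ D.Adj (κ z) a := fun h => hznot ⟨hzI, h⟩
        have hne := hnomid z hzIoo
        have hle := D.offdiag_nonpos (κ z) a hne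
        have : ¬ D.θ (κ z) a < 0 := fun h => hnadj ⟨hne, h⟩
        omega
      omega
  · -- Case 1: x is maximal among elements of color a in all of P
    push_neg at hcase
    have hxmaxP : ∀ y : P, κ y = κ x → ¬ x < y := by
      intro y hy
      exact hcase y (hy.trans hxa)
    obtain ⟨hfinU, hUle⟩ := hUCB x hxmaxP
    have hsub : hfin.toFinset ⊆ hfinU.toFinset := by
      intro z hz
      rw [Set.Finite.mem_toFinset]
      rcases (hmemU z).mp hz with ⟨_, h2, h3⟩
      exact ⟨trivial, h2, hxa ▸ h3⟩
    have hnnU : ∀ z ∈ hfinU.toFinset, 0 ≤ -D.θ (κ z) (κ x) := by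
      intro z hz
      rw [Set.Finite.mem_toFinset] at hz
      have := hz.2.2.2
      omega
    have hle1 : (∑ y ∈ hfin.toFinset, (-D.θ (κ y) a)) ≤ 1 := by
      calc (∑ y ∈ hfin.toFinset, (-D.θ (κ y) a))
          = ∑ y ∈ hfin.toFinset, (-D.θ (κ y) (κ x)) := by rw [hxa]
        _ ≤ ∑ y ∈ hfinU.toFinset, (-D.θ (κ y) (κ x)) :=
            Finset.sum_le_sum_of_subset_of_nonneg hsub (fun z hz _ => hnnU z hz)
        _ ≤ 1 := hUle
    have hge0 : 0 ≤ (∑ y ∈ hfin.toFinset, (-D.θ (κ y) a)) := by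
      apply Finset.sum_nonneg
      intro z hz
      have := hnnU z (hsub hz)
      rwa [hxa] at this
    constructor
    · simp only [Set.mem_insert_iff, Set.mem_singleton_iff]
      omega
    · constructor
      · omega
      · rintro ⟨w, hwF, hwa, -⟩
        exfalso
        rcases hEC x w (hxa.trans hwa.symm) with h | h
        · exact hcase w hwa (lt_of_le_of_ne h (fun he => hwF (he ▸ hxI)))
        · exact hwF (hI h hxI)

end GCP
end

section
/- Let P be a Γ-colored d-complete poset, let I be an order ideal of P, let F = P − I be the corresponding order filter, and let a be a color. Suppose I contains an element of color a and the lower frontier census L_a(F) is defined (i.e., P_a ∩ F has a minimal element x and L(x,F) is finite). Then (i) L_a(F) ∈ {0,1,2}, and (ii) L_a(F) = 2 if and only if I contains an element of color a that is a maximal element of I. -/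
namespace GCP

variable {Γ : Type*} [Fintype Γ] {P : Type*} [PartialOrder P] [LocallyFiniteOrder P]

/-- the lower frontier census of a filter, when defined and when
the complementary ideal contains an element of color `a`, lies in `{0,1,2}`,
and equals `2` iff the ideal has a maximal element of color `a`. -/
theorem statement8 (D : DynkinDiagram Γ) (κ : P → Γ) (hsurj : Function.Surjective κ)
    (hdc : DComplete D κ) (I : Set P) (hI : IsLowerSet I) (a : Γ)
    (hIa : ∃ z ∈ I, κ z = a) (x : P)
    (hxF : x ∈ Iᶜ) (hxa : κ x = a) (hxmin : ∀ y ∈ Iᶜ, κ y = a → ¬ y < x)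
    (hfin : (LSet D κ Iᶜ x).Finite) :
    (∑ y ∈ hfin.toFinset, (-D.θ (κ y) a)) ∈ ({0, 1, 2} : Set ℤ) ∧
      ((∑ y ∈ hfin.toFinset, (-D.θ (κ y) a)) = 2 ↔
        ∃ y ∈ I, κ y = a ∧ ∀ z ∈ I, ¬ y < z) := by
  classical
  obtain ⟨hEC, hNA, hAC, hICE2, -⟩ := hdc
  obtain ⟨z, hzI, hza⟩ := hIa
  have hIax : ∀ y ∈ I, κ y = a → y < x := by
    intro y hyI hya
    rcases hEC y x (by rw [hya, hxa]) with h | h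
    · exact lt_of_le_of_ne h (fun h' => hxF (h' ▸ hyI))
    · exact absurd (hI h hyI) hxF
  have hzx : z < x := hIax z hzI hza
  have hSne : z ∈ (Finset.Icc z x).filter (fun y => κ y = a ∧ y ∈ I) := by
    simp [hza, hzI, hzx.le]
  obtain ⟨w, hwS, hwmax⟩ : ∃ w ∈ (Finset.Icc z x).filter (fun y => κ y = a ∧ y ∈ I),
      ∀ y ∈ (Finset.Icc z x).filter (fun y => κ y = a ∧ y ∈ I), ¬ w < y := by
    obtain ⟨w, hw⟩ := Finset.exists_maximal
      (Finset.nonempty_of_ne_empty (Finset.ne_empty_of_mem hSne))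
    exact ⟨w, hw.1, fun y hy hlt => hlt.not_ge (hw.2 hy hlt.le)⟩
  simp only [Finset.mem_filter, Finset.mem_Icc] at hwS
  obtain ⟨⟨hzw, -⟩, hwa, hwI⟩ := hwS
  have hwx : w < x := hIax w hwI hwa
  have hwtop : ∀ y ∈ I, κ y = a → y ≤ w := by
    intro y hyI hya
    rcases hEC y w (by rw [hya, hwa]) with h | h
    · exact h
    · rcases hEC z y (by rw [hza, hya]) with h2 | h2
      · have hyS : y ∈ (Finset.Icc z x).filter (fun y => κ y = a ∧ y ∈ I) := by
          simp [hya, hyI, h2, (hIax y hyI hya).le]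
        exact (h.lt_or_eq.resolve_left (hwmax y hyS)).ge
      · exact h2.trans hzw
  have hcons : Consecutive κ a w x := by
    refine ⟨hwx, hwa, hxa, ?_⟩
    intro t ht hta
    rw [Finset.mem_Ioo] at ht
    by_cases htI : t ∈ I
    · exact absurd (hwtop t htI hta) ht.1.not_ge
    · exact hxmin t htI hta ht.2
  have hzero : ∀ t, κ t ≠ a → ¬ D.Adj (κ t) a → -D.θ (κ t) a = 0 := by
    intro t hne hnadj
    have h1 := D.offdiag_nonpos (κ t) a hne
    have h2 : D.θ (κ t) a = 0 := le_antisymm h1 (not_lt.mp fun h => hnadj ⟨hne, h⟩)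
    omega
  have hone : ∀ t, D.Adj (κ t) a → 1 ≤ -D.θ (κ t) a := fun t h => by
    have := h.2; omega
  have hsum2 : ∑ t ∈ Finset.Ioo w x, (-D.θ (κ t) a) = 2 := hICE2 a w x hcons
  have hnota : ∀ t ∈ Finset.Ioo w x, κ t ≠ a := fun t ht => hcons.2.2.2 t ht
  have hsplit := Finset.sum_filter_add_sum_filter_not (Finset.Ioo w x) (· ∈ I)
    (fun t => -D.θ (κ t) a)
  set SI := (Finset.Ioo w x).filter (fun t => t ∈ I ∧ D.Adj (κ t) a) with hSIdef
  have hsumI : ∑ t ∈ SI, (-D.θ (κ t) a)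
      = ∑ t ∈ (Finset.Ioo w x).filter (· ∈ I), (-D.θ (κ t) a) := by
    refine Finset.sum_subset ?_ ?_
    · intro t ht
      rw [hSIdef, Finset.mem_filter] at ht
      exact Finset.mem_filter.mpr ⟨ht.1, ht.2.1⟩
    · intro t ht htn
      rw [Finset.mem_filter] at ht
      rw [hSIdef, Finset.mem_filter] at htn
      exact hzero t (hnota t ht.1) (fun hadj => htn ⟨ht.1, ht.2, hadj⟩)
  have hmemL : ∀ t, t ∈ hfin.toFinset ↔ t ∉ I ∧ t < x ∧ D.Adj (κ t) a := by
    intro t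
    rw [Set.Finite.mem_toFinset]
    constructor
    · rintro ⟨htF, htx, hadj⟩
      exact ⟨htF, htx, hxa ▸ hadj⟩
    · rintro ⟨htF, htx, hadj⟩
      exact ⟨htF, htx, hxa ▸ hadj⟩
  have hsumF : ∑ t ∈ hfin.toFinset, (-D.θ (κ t) a)
      = ∑ t ∈ (Finset.Ioo w x).filter (· ∉ I), (-D.θ (κ t) a) := by
    refine Finset.sum_subset ?_ ?_
    · intro t ht
      rw [hmemL] at ht
      obtain ⟨htF, htx, hadj⟩ := ht
      have hwt : w < t := by
        rcases hAC t w (by rw [hwa]; exact hadj) with h | h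
        · exact absurd (hI h hwI) htF
        · exact lt_of_le_of_ne h (fun h' => htF (h' ▸ hwI))
      exact Finset.mem_filter.mpr ⟨Finset.mem_Ioo.mpr ⟨hwt, htx⟩, htF⟩
    · intro t ht htn
      rw [Finset.mem_filter] at ht
      rw [hmemL] at htn
      exact hzero t (hnota t ht.1) (fun hadj => htn ⟨ht.2, (Finset.mem_Ioo.mp ht.1).2, hadj⟩)
  have hnnF : 0 ≤ ∑ t ∈ hfin.toFinset, (-D.θ (κ t) a) := by
    refine Finset.sum_nonneg ?_
    intro t ht
    rw [hmemL] at ht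
    have := hone t ht.2.2; omega
  have hnnI : 0 ≤ ∑ t ∈ SI, (-D.θ (κ t) a) := by
    refine Finset.sum_nonneg ?_
    intro t ht
    rw [hSIdef, Finset.mem_filter] at ht
    have := hone t ht.2.2; omega
  have heq : ∑ t ∈ hfin.toFinset, (-D.θ (κ t) a) + ∑ t ∈ SI, (-D.θ (κ t) a) = 2 := by
    rw [hsumF, hsumI]; linarith [hsplit, hsum2]
  have hq0 : ∑ t ∈ SI, (-D.θ (κ t) a) = 0 ↔ SI = ∅ := by
    constructor
    · intro h0
      refine Finset.eq_empty_of_forall_notMem ?_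
      intro t ht
      have hz := (Finset.sum_eq_zero_iff_of_nonneg (fun i hi => by
        rw [hSIdef, Finset.mem_filter] at hi
        have := hone i hi.2.2; omega)).mp h0 t ht
      rw [hSIdef, Finset.mem_filter] at ht
      have := hone t ht.2.2; omega
    · intro h0; rw [h0, Finset.sum_empty]
  have hSImax : SI = ∅ ↔ ∃ y ∈ I, κ y = a ∧ ∀ u ∈ I, ¬ y < u := by
    constructor
    · intro hSIe
      refine ⟨w, hwI, hwa, ?_⟩
      intro u huI hlt
      obtain ⟨v, hv, hvmin⟩ : ∃ v ∈ Finset.Ioc w u, ∀ t ∈ Finset.Ioc w u, ¬ t < v := by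
        obtain ⟨v, hv⟩ := Finset.exists_minimal
          (Finset.nonempty_of_ne_empty (Finset.ne_empty_of_mem
            (Finset.mem_Ioc.mpr ⟨hlt, le_refl u⟩)))
        exact ⟨v, hv.1, fun t ht hlt' => hlt'.not_ge (hv.2 ht hlt'.le)⟩
      rw [Finset.mem_Ioc] at hv
      have hvI : v ∈ I := hI hv.2 huI
      have hcov : w ⋖ v := by
        refine ⟨hv.1, ?_⟩
        intro t h1 h2
        exact hvmin t (Finset.mem_Ioc.mpr ⟨h1, h2.le.trans hv.2⟩) h2
      have hadj : D.Adj (κ v) a := hwa ▸ (hNA w v hcov).symm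
      have hvx : v < x := by
        rcases hAC v x (hxa ▸ hadj) with h | h
        · exact lt_of_le_of_ne h (fun h' => hxF (h' ▸ hvI))
        · exact absurd (hI h hvI) hxF
      have : v ∈ SI := by
        rw [hSIdef, Finset.mem_filter]
        exact ⟨Finset.mem_Ioo.mpr ⟨hv.1, hvx⟩, hvI, hadj⟩
      rw [hSIe] at this
      exact absurd this (Finset.notMem_empty v)
    · rintro ⟨y, hyI, hya, hymax⟩
      have hyw : y = w := ((hwtop y hyI hya).lt_or_eq).resolve_left (hymax w hwI)
      refine Finset.eq_empty_of_forall_notMem ?_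
      intro t ht
      rw [hSIdef, Finset.mem_filter, Finset.mem_Ioo] at ht
      exact hymax t ht.2.1 (hyw ▸ ht.1.1)
  constructor
  · simp only [Set.mem_insert_iff, Set.mem_singleton_iff]
    obtain ⟨s, hs⟩ : ∃ s, ∑ t ∈ hfin.toFinset, (-D.θ (κ t) a) = s := ⟨_, rfl⟩
    obtain ⟨q, hq⟩ : ∃ q, ∑ t ∈ SI, (-D.θ (κ t) a) = q := ⟨_, rfl⟩
    rw [hs] at hnnF ⊢
    rw [hq] at hnnI
    rw [hs, hq] at heq
    omega
  · rw [show ((∑ t ∈ hfin.toFinset, (-D.θ (κ t) a)) = 2 ↔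
        ∑ t ∈ SI, (-D.θ (κ t) a) = 0) from by constructor <;> intro h <;> linarith,
      hq0, hSImax]

end GCP
end
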